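/- Suppose A ⊆ ℤ⁺ is infinite and geometrically sparse, with strictly increasing enumeration (a_n)_{n=0}^∞. Then there exist real numbers c > 1 and Θ ≥ 0, a sequence (λ_m)_{m=0}^∞ of positive real numbers, and a weakly increasing surjective function f : ℕ → ℕ such that: (i) the set {λ_m : m ∈ ℕ} is geometric; (ii) λ_{m+1} ≥ c·λ_m for all m ∈ ℕ; (iii) |a_n − λ_{f(n)}| ≤ Θ for all n ∈ ℕ. Moreover, the counting function A(n) = |A ∩ {1,…,n}| is O(log n), i.e. there is a constant C > 0 with A(n) ≤ C·log n for all n ≥ 2. -/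
import Mathlib


open Filter Pointwise

/-- The `k`-fold sumset `X + ⋯ + X` (`k` times) of a set of integers. -/
def kFold (X : Set ℤ) (k : ℕ) : Set ℤ :=
  {z : ℤ | ∃ f : Fin k → ℤ, (∀ i, f i ∈ X) ∧ z = ∑ i, f i}

/-- `Σ_n(X) = ⋃_{k=1}^n k(X)`. -/
def sigmaSum (n : ℕ) (X : Set ℤ) : Set ℤ :=
  ⋃ k ∈ Finset.Icc 1 n, kFold X k

/-- `±A = {x ∈ ℤ : |x| ∈ A}`. -/
def pmSet (A : Set ℤ) : Set ℤ := {x : ℤ | |x| ∈ A}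

/-- The lower asymptotic density of a set of naturals:
`liminf_{n → ∞} |A ∩ {1,…,n}| / n`. -/
noncomputable def lowerDensity (A : Set ℕ) : ℝ :=
  Filter.liminf (fun n : ℕ => (Set.ncard (A ∩ Set.Icc 1 n) : ℝ) / n) Filter.atTop

/-- The set of naturals whose image in `ℤ` lies in `S`. -/
def intSetToNat (S : Set ℤ) : Set ℕ := {n : ℕ | (n : ℤ) ∈ S}

/-- `A ⊆ ℤ` is sufficiently sparse if `δ̲(Σ_n(±A) ∩ ℕ) = 0` for all `n ≥ 1`. -/
def SuffSparse (A : Set ℤ) : Prop :=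
  ∀ n : ℕ, 1 ≤ n → lowerDensity (intSetToNat (sigmaSum n (pmSet A))) = 0

/-- A set `S` of (positive) reals is geometric if `{s/t : s, t ∈ S, t ≤ s}` is a closed
and discrete subset of `ℝ`. -/
def IsGeometric (S : Set ℝ) : Prop :=
  IsClosed {x : ℝ | ∃ s ∈ S, ∃ t ∈ S, t ≤ s ∧ x = s / t} ∧
    DiscreteTopology {x : ℝ | ∃ s ∈ S, ∃ t ∈ S, t ≤ s ∧ x = s / t}

/-- `A ⊆ ℤ` is geometrically sparse if there is `f : A → ℝ⁺` with `f(A)` geometric and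
`sup_{a ∈ A} |a − f(a)| < ∞`. -/
def GeomSparse (A : Set ℤ) : Prop :=
  ∃ f : ℤ → ℝ, (∀ a ∈ A, 0 < f a) ∧ IsGeometric (f '' A) ∧
    ∃ C : ℝ, ∀ a ∈ A, |(a : ℝ) - f a| ≤ C

/-- If `A ⊆ ℤ⁺` is infinite and geometrically sparse with strictly increasing
enumeration `(a_n)`, then there are `c > 1`, `Θ ≥ 0`, positive reals `(λ_m)` with geometric
range and `λ_{m+1} ≥ c·λ_m`, and a weakly increasing surjection `f : ℕ → ℕ` with
`|a_n − λ_{f(n)}| ≤ Θ`; moreover `A(n) = |A ∩ {1,…,n}|` is `O(log n)`. -/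

lemma my_isolated_of_discrete {T : Set ℝ} (hd : DiscreteTopology T) {x : ℝ} (hx : x ∈ T) :
    ∃ ε > 0, ∀ y ∈ T, |y - x| < ε → y = x := by
  have h : IsOpen ({⟨x, hx⟩} : Set T) := isOpen_discrete _
  rw [Metric.isOpen_singleton_iff] at h
  obtain ⟨ε, hε, h⟩ := h
  refine ⟨ε, hε, fun y hy hyx => ?_⟩
  have := h ⟨y, hy⟩ (by simpa [Subtype.dist_eq, Real.dist_eq] using hyx)
  simpa using congrArg Subtype.val this

lemma my_closed_of_subset {S T : Set ℝ} (hST : S ⊆ T) (hTc : IsClosed T)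
    (hTd : DiscreteTopology T) : IsClosed S := by
  refine isClosed_of_closure_subset fun x hx => ?_
  have hxT : x ∈ T := hTc.closure_subset (closure_mono hST hx)
  obtain ⟨ε, hε, hiso⟩ := my_isolated_of_discrete hTd hxT
  rw [Metric.mem_closure_iff] at hx
  obtain ⟨y, hyS, hxy⟩ := hx ε hε
  have hxy' : |y - x| < ε := by rw [← Real.dist_eq]; rwa [dist_comm]
  have := hiso y (hST hyS) hxy'
  rwa [← this]

lemma my_strictMono_gap {a : ℕ → ℤ} (ha : StrictMono a) (j d : ℕ) : a j + d ≤ a (j + d) := by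
  induction d with
  | zero => simp
  | succ d ih =>
    have h2 : a (j + d) < a (j + d + 1) := ha (by omega)
    have he : j + (d + 1) = j + d + 1 := rfl
    rw [he]
    push_cast
    push_cast at ih
    omega

set_option maxHeartbeats 2000000 in
theorem geomSparse_structure (A : Set ℤ) (hApos : ∀ x ∈ A, 0 < x) (hGS : GeomSparse A)
    (a : ℕ → ℤ) (ha : StrictMono a) (hrange : Set.range a = A) :
    (∃ (c Θ : ℝ) (lam : ℕ → ℝ) (f : ℕ → ℕ),
      1 < c ∧ 0 ≤ Θ ∧ (∀ m, 0 < lam m) ∧ Monotone f ∧ Function.Surjective f ∧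
      IsGeometric (Set.range lam) ∧ (∀ m : ℕ, c * lam m ≤ lam (m + 1)) ∧
      ∀ n : ℕ, |(a n : ℝ) - lam (f n)| ≤ Θ) ∧
    ∃ C : ℝ, 0 < C ∧ ∀ n : ℕ, 2 ≤ n →
      (Set.ncard (A ∩ Set.Icc 1 (n : ℤ)) : ℝ) ≤ C * Real.log n := by
  obtain ⟨F, hFpos, ⟨hRc, hRd⟩, C, hC⟩ := hGS
  have hmemA : ∀ n, a n ∈ A := fun n => hrange ▸ Set.mem_range_self n
  have ha1 : ∀ n : ℕ, (n : ℤ) + 1 ≤ a n := by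
    intro n
    have h0 : 1 ≤ a 0 := hApos _ (hmemA 0)
    have h1 := my_strictMono_gap ha 0 n
    simp at h1; omega
  have hC0 : 0 ≤ C := le_trans (abs_nonneg _) (hC _ (hmemA 0))
  set V : Set ℝ := F '' A with hV
  set R : Set ℝ := {x : ℝ | ∃ s ∈ V, ∃ t ∈ V, t ≤ s ∧ x = s / t} with hRdef
  have hV0 : F (a 0) ∈ V := ⟨a 0, hmemA 0, rfl⟩
  have h1R : (1:ℝ) ∈ R := ⟨F (a 0), hV0, F (a 0), hV0, le_refl _, by
    rw [div_self (ne_of_gt (hFpos _ (hmemA 0)))]⟩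
  obtain ⟨ε, hε, hiso⟩ := my_isolated_of_discrete hRd h1R
  set c : ℝ := 1 + ε with hcdef
  have hc1 : 1 < c := by rw [hcdef]; linarith
  have hVpos : ∀ v ∈ V, 0 < v := by rintro v ⟨x, hx, rfl⟩; exact hFpos x hx
  -- ratio lemma
  have hratio : ∀ s ∈ V, ∀ t ∈ V, t < s → c * t ≤ s := by
    intro s hs t ht hts
    have htpos := hVpos t ht
    have hsr : s / t ∈ R := ⟨s, hs, t, ht, le_of_lt hts, rfl⟩
    have h1 : 1 < s / t := (one_lt_div htpos).2 hts
    by_contra hlt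
    push_neg at hlt
    have h2 : s / t < c := (div_lt_iff₀ htpos).2 (by linarith)
    have h3 : |s / t - 1| < ε := by
      rw [abs_of_pos (by linarith)]
      rw [hcdef] at h2; linarith
    have := hiso _ hsr h3
    rw [this] at h1; linarith
  -- basic bounds on g n := F (a n)
  have hg : ∀ n, |(a n : ℝ) - F (a n)| ≤ C := fun n => hC _ (hmemA n)
  have hgpos : ∀ n : ℕ, 0 < F (a n) := fun n => hFpos _ (hmemA n)
  have hgV : ∀ n : ℕ, F (a n) ∈ V := fun n => ⟨a n, hmemA n, rfl⟩
  have hglb : ∀ n : ℕ, (n : ℝ) + 1 - C ≤ F (a n) := by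
    intro n
    have h1 := hg n
    rw [abs_le] at h1
    have h2 : (n : ℝ) + 1 ≤ (a n : ℝ) := by exact_mod_cast ha1 n
    linarith
  have hgub : ∀ n : ℕ, F (a n) ≤ (a n : ℝ) + C := by
    intro n; have h1 := hg n; rw [abs_le] at h1; linarith
  have hga : ∀ n : ℕ, (a n : ℝ) ≤ F (a n) + C := by
    intro n; have h1 := hg n; rw [abs_le] at h1; linarith
  set N : ℕ := ⌈2*C/(c-1) + C⌉₊ + 1 with hNdef
  have hB : ∀ n, N ≤ n → 2*C/(c-1) < F (a n) := by
    intro n hn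
    have h1 : 2*C/(c-1) + C ≤ (⌈2*C/(c-1) + C⌉₊ : ℝ) := Nat.le_ceil _
    have h2 : (N : ℝ) ≤ n := by exact_mod_cast hn
    have h3 : ((⌈2*C/(c-1) + C⌉₊ : ℕ) : ℝ) + 1 = (N : ℝ) := by rw [hNdef]; push_cast; ring
    have := hglb n
    linarith
  -- monotone step
  have hstep : ∀ n, N ≤ n → F (a n) ≤ F (a (n+1)) := by
    intro n hn
    by_contra hlt
    push_neg at hlt
    have h2 := hratio _ (hgV n) _ (hgV (n+1)) hlt
    have ha' : (a n : ℝ) < a (n+1) := by exact_mod_cast ha (Nat.lt_succ_self n)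
    have hBn := hB (n+1) (by omega)
    have hcpos : (0:ℝ) < c - 1 := by linarith
    have h4 : F (a (n+1)) < 2*C/(c-1) := by
      rw [lt_div_iff₀ hcpos]
      have := hgub n
      have := hga (n+1)
      nlinarith
    linarith
  have hmono2 : ∀ j k, N ≤ j → j ≤ k → F (a j) ≤ F (a k) := by
    intro j k hj hjk
    obtain ⟨d, rfl⟩ := Nat.exists_eq_add_of_le hjk
    clear hjk
    induction d with
    | zero => simp
    | succ d ih =>
      have h1 : j + (d + 1) = (j + d) + 1 := rfl
      rw [h1]
      exact le_trans ih (hstep (j + d) (by omega))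
  -- the sequence h
  set h : ℕ → ℝ := fun k => F (a (N + k)) with hhdef
  have hmonoh : ∀ j k : ℕ, j ≤ k → h j ≤ h k := by
    intro j k hjk
    exact hmono2 (N + j) (N + k) (by omega) (by omega)
  have hhV : ∀ k, h k ∈ V := fun k => hgV (N + k)
  have hhpos : ∀ k, 0 < h k := fun k => hgpos (N + k)
  -- f0
  set f0 : ℕ → ℕ := fun k =>
    Nat.rec 0 (fun k' ih => ih + if h k' < h (k'+1) then 1 else 0) k with hf0def
  have hf00 : f0 0 = 0 := rfl
  have hf0succ : ∀ k, f0 (k+1) = f0 k + if h k < h (k+1) then 1 else 0 := fun k => rfl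
  have hf0mono : Monotone f0 := monotone_nat_of_le_succ fun k => by
    rw [hf0succ]; exact Nat.le_add_right _ _
  have hstep1 : ∀ k, f0 (k+1) ≤ f0 k + 1 := by
    intro k; rw [hf0succ]; split <;> omega
  have heqblock : ∀ k, f0 k = f0 (k+1) → h k = h (k+1) := by
    intro k hk
    by_contra hne
    have hlt : h k < h (k+1) := lt_of_le_of_ne (hmonoh k (k+1) (by omega)) hne
    rw [hf0succ, if_pos hlt] at hk; omega
  have hjump : ∀ k, f0 k < f0 (k+1) → h k < h (k+1) := by
    intro k hk
    by_contra hge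
    rw [hf0succ, if_neg hge] at hk; omega
  have hL1 : ∀ k d, f0 k = f0 (k + d) → h k = h (k + d) := by
    intro k d
    induction d with
    | zero => intro; rfl
    | succ d ih =>
      intro hkd
      have he : k + (d + 1) = (k + d) + 1 := rfl
      rw [he] at hkd ⊢
      have h1 : f0 k ≤ f0 (k + d) := hf0mono (Nat.le_add_right k d)
      have h2 : f0 (k + d) ≤ f0 (k + d + 1) := hf0mono (Nat.le_succ (k + d))
      have h3 : f0 k = f0 (k + d) := by omega
      rw [ih h3]
      have h4 : f0 (k + d) = f0 (k + d + 1) := by omega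
      exact heqblock (k + d) h4
  have hunbdd : ∀ k, ∃ k', k ≤ k' ∧ f0 k < f0 k' := by
    intro k
    obtain ⟨k', hk'⟩ : ∃ k' : ℕ, k ≤ k' ∧ h k + C < (k' : ℝ) + 1 :=
      ⟨k + ⌈h k + C⌉₊ + 1, by omega, by
        have h1 : h k + C ≤ (⌈h k + C⌉₊ : ℝ) := Nat.le_ceil _
        have h2 : ((⌈h k + C⌉₊ : ℕ) : ℝ) ≤ ((k + ⌈h k + C⌉₊ + 1 : ℕ) : ℝ) := by
          exact_mod_cast (by omega : ⌈h k + C⌉₊ ≤ k + ⌈h k + C⌉₊ + 1)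
        linarith⟩
    refine ⟨k', hk'.1, ?_⟩
    have hlt : h k < h k' := by
      have h1 : ((N + k' : ℕ) : ℝ) + 1 - C ≤ h k' := hglb (N + k')
      have h2 : (k' : ℝ) ≤ ((N + k' : ℕ) : ℝ) := by push_cast; linarith [Nat.cast_nonneg (α := ℝ) N]
      linarith [hk'.2]
    by_contra hge
    push_neg at hge
    have heq : f0 k = f0 k' := le_antisymm (hf0mono hk'.1) hge
    obtain ⟨d, rfl⟩ := Nat.exists_eq_add_of_le hk'.1
    have := hL1 k d heq
    linarith
  have hsurj0 : Function.Surjective f0 := by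
    intro m
    induction m with
    | zero => exact ⟨0, hf00⟩
    | succ m ihm =>
      obtain ⟨k, hk⟩ := ihm
      obtain ⟨k', _, hk2⟩ := hunbdd k
      have hP : ∃ j, m + 1 ≤ f0 j := ⟨k', by omega⟩
      have hj : m + 1 ≤ f0 (Nat.find hP) := Nat.find_spec hP
      have hj0 : Nat.find hP ≠ 0 := by
        intro h0; rw [h0, hf00] at hj; omega
      obtain ⟨j', hj'⟩ : ∃ j', Nat.find hP = j' + 1 := ⟨Nat.find hP - 1, by omega⟩
      have hlt : ¬ (m + 1 ≤ f0 j') := Nat.find_min hP (by omega)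
      have h3 := hstep1 j'
      rw [hj'] at hj
      exact ⟨j' + 1, by omega⟩
  set lam : ℕ → ℝ := fun m => h (Nat.find (hsurj0 m)) with hlamdef
  have hL1' : ∀ j k, f0 j = f0 k → j ≤ k → h j = h k := by
    intro j k hjk hle
    obtain ⟨d, rfl⟩ := Nat.exists_eq_add_of_le hle
    exact hL1 j d hjk
  have hlamf0 : ∀ k, lam (f0 k) = h k := by
    intro k
    have hj : f0 (Nat.find (hsurj0 (f0 k))) = f0 k := Nat.find_spec (hsurj0 (f0 k))
    have hjk : Nat.find (hsurj0 (f0 k)) ≤ k := Nat.find_min' (hsurj0 (f0 k)) rfl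
    show h (Nat.find (hsurj0 (f0 k))) = h k
    exact hL1' _ _ hj hjk
  have hlampos : ∀ m, 0 < lam m := fun m => hhpos _
  have hlamV : ∀ m, lam m ∈ V := fun m => hhV _
  -- growth
  have hgrow : ∀ m, c * lam m ≤ lam (m+1) := by
    intro m
    have hj : f0 (Nat.find (hsurj0 (m+1))) = m + 1 := Nat.find_spec (hsurj0 (m+1))
    have hj0 : Nat.find (hsurj0 (m+1)) ≠ 0 := by
      intro h0; rw [h0, hf00] at hj; omega
    obtain ⟨j', hj'⟩ : ∃ j', Nat.find (hsurj0 (m+1)) = j' + 1 :=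
      ⟨Nat.find (hsurj0 (m+1)) - 1, by omega⟩
    have h2 : f0 j' ≠ m + 1 := by
      intro hcon
      exact absurd hcon (Nat.find_min (hsurj0 (m+1)) (by omega))
    have h3 := hstep1 j'
    have h3b : f0 j' ≤ f0 (j' + 1) := hf0mono (Nat.le_succ j')
    rw [hj'] at hj
    have hf0j' : f0 j' = m := by omega
    have h4 : h j' < h (j'+1) := hjump j' (by omega)
    have h5 : lam m = h j' := by rw [← hf0j', hlamf0]
    have h6 : lam (m+1) = h (j'+1) := by rw [← hj]; exact hlamf0 (j'+1)
    rw [h5, h6]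
    exact hratio _ (hhV (j'+1)) _ (hhV j') h4
  -- geometric
  have hgeom : IsGeometric (Set.range lam) := by
    have hsub : Set.range lam ⊆ V := by rintro x ⟨m, rfl⟩; exact hlamV m
    have hRsub : {x : ℝ | ∃ s ∈ Set.range lam, ∃ t ∈ Set.range lam, t ≤ s ∧ x = s / t} ⊆ R := by
      rintro x ⟨s, hs, t, ht, hts, rfl⟩
      exact ⟨s, hsub hs, t, hsub ht, hts, rfl⟩
    exact ⟨my_closed_of_subset hRsub hRc hRd, DiscreteTopology.of_subset hRd hRsub⟩
  -- f
  set f : ℕ → ℕ := fun n => if n < N then 0 else f0 (n - N) with hfdef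
  have hfN : ∀ n, N ≤ n → f n = f0 (n - N) := by
    intro n hn; rw [hfdef]; simp only []; rw [if_neg (by omega)]
  have hfmono : Monotone f := by
    intro n m hnm
    by_cases hn : n < N
    · have : f n = 0 := by rw [hfdef]; simp only []; rw [if_pos hn]
      rw [this]; exact Nat.zero_le _
    · push_neg at hn
      rw [hfN n hn, hfN m (by omega)]
      exact hf0mono (by omega)
  have hfsurj : Function.Surjective f := by
    intro m
    obtain ⟨k, hk⟩ := hsurj0 m
    refine ⟨N + k, ?_⟩
    rw [hfN (N + k) (by omega)]
    rw [Nat.add_sub_cancel_left]; exact hk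
  have hbound : ∀ n, N ≤ n → |(a n : ℝ) - lam (f n)| ≤ C := by
    intro n hn
    rw [hfN n hn, hlamf0]
    have : N + (n - N) = n := by omega
    rw [hhdef]
    simp only []
    rw [this]
    exact hg n
  -- Theta
  set Θ : ℝ := C + (a N : ℝ) + lam 0 with hΘdef
  have haN1 : (1:ℝ) ≤ (a N : ℝ) := by
    have := ha1 N; have : (1:ℤ) ≤ a N := by omega
    exact_mod_cast this
  have hΘ0 : 0 ≤ Θ := by rw [hΘdef]; linarith [hlampos 0]
  have hCΘ : C ≤ Θ := by rw [hΘdef]; linarith [hlampos 0]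
  have hTheta : ∀ n, |(a n : ℝ) - lam (f n)| ≤ Θ := by
    intro n
    by_cases hn : n < N
    · have hfn : f n = 0 := by rw [hfdef]; simp only []; rw [if_pos hn]
      rw [hfn]
      have h1 : (a n : ℝ) ≤ (a N : ℝ) := by exact_mod_cast (ha.monotone (le_of_lt hn))
      have h2 : (1:ℝ) ≤ (a n : ℝ) := by
        have := ha1 n; have : (1:ℤ) ≤ a n := by omega
        exact_mod_cast this
      rw [abs_le]
      constructor <;> [skip; skip] <;> · rw [hΘdef]; linarith [hlampos 0]
    · exact le_trans (hbound n (by omega)) hCΘ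
  -- counting part setup
  have hexp : ∀ m, c ^ m * lam 0 ≤ lam m := by
    intro m
    induction m with
    | zero => simp
    | succ m ih =>
      have h1 : c ^ (m+1) * lam 0 = c * (c ^ m * lam 0) := by ring
      rw [h1]
      calc c * (c ^ m * lam 0) ≤ c * lam m :=
            mul_le_mul_of_nonneg_left ih (by linarith)
        _ ≤ lam (m+1) := hgrow m
  set T : ℕ := ⌈2*C⌉₊ + 1 with hTdef
  have hT1 : 1 ≤ T := by omega
  have hT2C : 2*C < (T:ℝ) := by
    have h1 : 2*C ≤ (⌈2*C⌉₊ : ℝ) := Nat.le_ceil _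
    have h2 : ((⌈2*C⌉₊ : ℕ):ℝ) + 1 = (T:ℝ) := by rw [hTdef]; push_cast; ring
    linarith
  have hgap : ∀ j k, N ≤ j → j ≤ k → f j = f k → (k : ℝ) - (j:ℝ) ≤ 2*C := by
    intro j k hj hjk hfjk
    obtain ⟨d, rfl⟩ := Nat.exists_eq_add_of_le hjk
    have h1 : a j + (d:ℤ) ≤ a (j + d) := my_strictMono_gap ha j d
    have h2 := hbound j hj
    have h3 := hbound (j + d) (by omega)
    rw [hfjk] at h2
    rw [abs_le] at h2 h3
    have h4 : (a j : ℝ) + (d:ℝ) ≤ (a (j+d) : ℝ) := by exact_mod_cast h1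
    push_cast
    linarith
  have hG : ∀ k, N ≤ k → (k:ℝ) < (N:ℝ) + (T:ℝ) * ((f k : ℝ) + 1) := by
    intro k
    induction k using Nat.strong_induction_on with
    | _ k IH =>
      intro hk
      by_cases hkT : k < N + T
      · have h1 : (k:ℝ) < (N:ℝ) + (T:ℝ) := by exact_mod_cast hkT
        have h2 : (T:ℝ) ≤ (T:ℝ) * ((f k : ℝ) + 1) := by
          have : (1:ℝ) ≤ (f k : ℝ) + 1 := by
            have := Nat.cast_nonneg (α := ℝ) (f k); linarith
          nlinarith [Nat.cast_nonneg (α := ℝ) T]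
        linarith
      · push_neg at hkT
        have hk' : N ≤ k - T := by omega
        have hcast : ((k - T : ℕ) : ℝ) = (k:ℝ) - (T:ℝ) := by
          have : T ≤ k := by omega
          push_cast [this]; ring
        have hne : f (k - T) ≠ f k := by
          intro he
          have h5 := hgap (k-T) k hk' (by omega) he
          rw [hcast] at h5
          linarith
        have hle : f (k - T) ≤ f k := hfmono (by omega)
        have h2 : f (k - T) + 1 ≤ f k := by omega
        have h3 := IH (k - T) (by omega) hk'
        rw [hcast] at h3
        have h6 : (T:ℝ) * ((f (k-T) : ℝ) + 1) ≤ (T:ℝ) * (f k : ℝ) := by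
          apply mul_le_mul_of_nonneg_left _ (Nat.cast_nonneg T)
          have : ((f (k-T) : ℕ) : ℝ) + 1 ≤ ((f k : ℕ) : ℝ) := by exact_mod_cast h2
          exact this
        linarith
  -- constants for the log bound
  have hlogc : 0 < Real.log c := Real.log_pos hc1
  have hlog2 : 0 < Real.log 2 := Real.log_pos one_lt_two
  set E : ℝ := Real.log (1 + Θ) + |Real.log (lam 0)| with hEdef
  have hE0 : 0 ≤ E := by
    rw [hEdef]
    have : 0 ≤ Real.log (1 + Θ) := Real.log_nonneg (by linarith)
    positivity
  set C' : ℝ := ((N:ℝ) + (T:ℝ) + (T:ℝ)*E/Real.log c)/Real.log 2 + (T:ℝ)/Real.log c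
    with hC'def
  have hbr0 : 0 ≤ (N:ℝ) + (T:ℝ) + (T:ℝ)*E/Real.log c := by positivity
  have hC'pos : 0 < C' := by
    rw [hC'def]
    have h1 : 0 ≤ ((N:ℝ) + (T:ℝ) + (T:ℝ)*E/Real.log c)/Real.log 2 := by positivity
    have h2 : 0 < (T:ℝ)/Real.log c := by
      apply div_pos _ hlogc
      exact_mod_cast hT1
    linarith
  refine ⟨⟨c, Θ, lam, f, hc1, hΘ0, hlampos, hfmono, hfsurj, hgeom, hgrow, hTheta⟩,
    C', hC'pos, ?_⟩
  intro n hn2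
  have hn2R : (2:ℝ) ≤ (n:ℝ) := by exact_mod_cast hn2
  set M : ℝ := (Real.log ((n:ℝ) + Θ) - Real.log (lam 0)) / Real.log c with hMdef
  set K : ℕ := N + T * (⌊M⌋₊ + 1) with hKdef
  have hnΘpos : (0:ℝ) < (n:ℝ) + Θ := by linarith
  -- subset claim
  have hsubset : A ∩ Set.Icc 1 (n:ℤ) ⊆ ↑((Finset.range K).image a) := by
    rintro x ⟨hxA, hx1, hxn⟩
    rw [← hrange] at hxA
    obtain ⟨k, rfl⟩ := hxA
    have hkK : k < K := by
      by_cases hk : k < N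
      · omega
      · push_neg at hk
        have h1 : c ^ (f k) * lam 0 ≤ lam (f k) := hexp _
        have h2 := hbound k hk
        rw [abs_le] at h2
        have h3 : (a k : ℝ) ≤ (n:ℝ) := by exact_mod_cast hxn
        have h4 : lam (f k) ≤ (n:ℝ) + Θ := by linarith
        have h5 : c ^ (f k) ≤ ((n:ℝ) + Θ) / lam 0 := by
          rw [le_div_iff₀ (hlampos 0)]; linarith
        have h6 : Real.log (c ^ (f k)) ≤ Real.log (((n:ℝ) + Θ) / lam 0) :=
          Real.log_le_log (by positivity) h5
        rw [Real.log_pow, Real.log_div (ne_of_gt hnΘpos) (ne_of_gt (hlampos 0))] at h6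
        have h8 : ((f k : ℕ) : ℝ) ≤ M := by
          rw [hMdef, le_div_iff₀ hlogc]
          exact_mod_cast h6
        have h9 : f k ≤ ⌊M⌋₊ := Nat.le_floor h8
        have h10 := hG k hk
        have h10n : k < N + T * (f k + 1) := by exact_mod_cast h10
        have h11 : T * (f k + 1) ≤ T * (⌊M⌋₊ + 1) :=
          Nat.mul_le_mul_left T (by omega)
        rw [hKdef]
        omega
    simp only [Finset.coe_image, Set.mem_image, Finset.mem_coe, Finset.mem_range]
    exact ⟨k, hkK, rfl⟩
  have hcard : (Set.ncard (A ∩ Set.Icc 1 (n:ℤ)) : ℝ) ≤ (K:ℝ) := by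
    have h1 : Set.ncard (A ∩ Set.Icc 1 (n:ℤ)) ≤ Set.ncard
        (↑((Finset.range K).image a) : Set ℤ) :=
      Set.ncard_le_ncard hsubset (Finset.finite_toSet _)
    rw [Set.ncard_coe_finset] at h1
    have h2 : ((Finset.range K).image a).card ≤ K := by
      calc ((Finset.range K).image a).card ≤ (Finset.range K).card := Finset.card_image_le
        _ = K := Finset.card_range K
    have h3 : Set.ncard (A ∩ Set.Icc 1 (n:ℤ)) ≤ K := le_trans h1 h2
    exact_mod_cast h3
  -- final log bound
  have hlogn2 : Real.log 2 ≤ Real.log n := Real.log_le_log (by norm_num) hn2R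
  have hlognpos : 0 < Real.log n := lt_of_lt_of_le hlog2 hlogn2
  have hMfloor : ((⌊M⌋₊ : ℕ) : ℝ) ≤ max M 0 := by
    rcases le_or_gt 0 M with hM0 | hM0
    · exact le_max_of_le_left (Nat.floor_le hM0)
    · rw [Nat.floor_of_nonpos (le_of_lt hM0)]; simp
  have hMb : M ≤ (Real.log n + E)/Real.log c := by
    rw [hMdef, div_le_div_iff_of_pos_right hlogc]
    have t0 : (n:ℝ) + Θ ≤ (n:ℝ) * (1 + Θ) := by nlinarith
    have t1 : Real.log ((n:ℝ) + Θ) ≤ Real.log n + Real.log (1 + Θ) := by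
      calc Real.log ((n:ℝ) + Θ) ≤ Real.log ((n:ℝ) * (1 + Θ)) :=
            Real.log_le_log hnΘpos t0
        _ = Real.log n + Real.log (1 + Θ) :=
            Real.log_mul (by linarith) (by linarith)
    have t2 : -Real.log (lam 0) ≤ |Real.log (lam 0)| := neg_le_abs _
    rw [hEdef]; linarith
  have hMb2 : max M 0 ≤ (Real.log n + E)/Real.log c :=
    max_le hMb (div_nonneg (by linarith) (le_of_lt hlogc))
  have hKb : (K:ℝ) ≤ (N:ℝ) + (T:ℝ) * ((Real.log n + E)/Real.log c + 1) := by
    rw [hKdef]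
    push_cast
    have h1 : ((⌊M⌋₊:ℕ):ℝ) + 1 ≤ (Real.log n + E)/Real.log c + 1 := by
      linarith [le_trans hMfloor hMb2]
    nlinarith [Nat.cast_nonneg (α := ℝ) T]
  calc (Set.ncard (A ∩ Set.Icc 1 (n:ℤ)) : ℝ) ≤ (K:ℝ) := hcard
    _ ≤ (N:ℝ) + (T:ℝ) * ((Real.log n + E)/Real.log c + 1) := hKb
    _ = ((N:ℝ) + (T:ℝ) + (T:ℝ)*E/Real.log c) + ((T:ℝ)/Real.log c) * Real.log n := by
        field_simp; ring
    _ ≤ (((N:ℝ) + (T:ℝ) + (T:ℝ)*E/Real.log c)/Real.log 2) * Real.log n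
        + ((T:ℝ)/Real.log c) * Real.log n := by
        have h1 : ((N:ℝ) + (T:ℝ) + (T:ℝ)*E/Real.log c)/Real.log 2 * Real.log 2
            = (N:ℝ) + (T:ℝ) + (T:ℝ)*E/Real.log c := div_mul_cancel₀ _ (ne_of_gt hlog2)
        have h2 := mul_le_mul_of_nonneg_left hlogn2 (div_nonneg hbr0 (le_of_lt hlog2))
        linarith
    _ = C' * Real.log n := by rw [hC'def]; ring
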